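/- Let p be an odd prime, η = exp(2πi/p), and let S be a set of sequences φ : ℤ/pℤ → ℂ. Suppose σ, ρ are real numbers such that (i) for every φ ∈ S and every (t, w) ≠ (0, 0), |A_φ(t, w)| ≤ σ, and (ii) for every pair φ, ψ ∈ S that are phase-shift distinct, |A_{φ,ψ}(t, w)| ≤ ρ for all (t, w). Then the same bounds hold for the Fourier transforms: for every φ ∈ S and (t, w) ≠ (0, 0), |A_{F[φ]}(t, w)| ≤ σ, and for every phase-shift distinct pair φ, ψ ∈ S, |A_{F[φ], F[ψ]}(t, w)| ≤ ρ for all (t, w). In particular, the auto- and cross-correlation functions satisfy |C_φ(t)| ≤ σ for t ≠ 0 and |C_{φ,ψ}(t)| ≤ ρ for phase-shift distinct φ, ψ. -/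

import Mathlib

open Complex Finset

/-- `η = exp(2πi/p)`, the `p`-th primitive root of unity. -/
noncomputable def etaRoot (p : ℕ) : ℂ := Complex.exp (2 * Real.pi * Complex.I / p)

/-- The time-shift operator `L_t[φ](i) = φ(i + t)`. -/
def Lop (p : ℕ) (t : ZMod p) (φ : ZMod p → ℂ) : ZMod p → ℂ := fun i => φ (i + t)

/-- The phase-shift operator `M_w[φ](i) = η^{w i}·φ(i)`. -/
noncomputable def Mop (p : ℕ) [NeZero p] (w : ZMod p) (φ : ZMod p → ℂ) : ZMod p → ℂ :=
  fun i => etaRoot p ^ ((w * i).val) * φ i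

/-- The discrete Fourier transform `F[φ](j) = (1/√p)·Σ_i η^{j i}·φ(i)`. -/
noncomputable def Fop (p : ℕ) [NeZero p] (φ : ZMod p → ℂ) : ZMod p → ℂ :=
  fun j => (1 / (Real.sqrt p : ℂ)) * ∑ i : ZMod p, etaRoot p ^ ((j * i).val) * φ i

/-- The inner product `⟨φ,ψ⟩ = Σ_i φ(i)·conj(ψ(i))`. -/
noncomputable def innerSeq (p : ℕ) [NeZero p] (φ ψ : ZMod p → ℂ) : ℂ :=
  ∑ i : ZMod p, φ i * (starRingEnd ℂ) (ψ i)

/-- The ambiguity function `A_{φ,ψ}(t,w) = ⟨φ, M_w L_t ψ⟩`. -/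
noncomputable def amb (p : ℕ) [NeZero p] (φ ψ : ZMod p → ℂ) (t w : ZMod p) : ℂ :=
  innerSeq p φ (Mop p w (Lop p t ψ))

/-- `φ` and `ψ` are phase-shift distinct: `ψ ≠ M_w φ` for all `w`. -/
def PhaseShiftDistinct (p : ℕ) [NeZero p] (φ ψ : ZMod p → ℂ) : Prop :=
  ∀ w : ZMod p, ψ ≠ Mop p w φ

section lems
variable (p : ℕ) [NeZero p]

lemma eta_prim : IsPrimitiveRoot (etaRoot p) p :=
  Complex.isPrimitiveRoot_exp p (NeZero.ne p)

lemma eta_pow_p : etaRoot p ^ p = 1 := (eta_prim p).pow_eq_one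

lemma eta_mod (n : ℕ) : etaRoot p ^ (n % p) = etaRoot p ^ n := by
  conv_rhs => rw [← Nat.div_add_mod n p]
  rw [pow_add, pow_mul, eta_pow_p, one_pow, one_mul]

lemma epow_add (a b : ZMod p) :
    etaRoot p ^ ((a + b).val) = etaRoot p ^ a.val * etaRoot p ^ b.val := by
  rw [ZMod.val_add, eta_mod, pow_add]

lemma eta_abs (n : ℕ) : ‖etaRoot p ^ n‖ = 1 := by
  have h : ‖etaRoot p‖ = 1 :=
    Complex.norm_eq_one_of_pow_eq_one (eta_pow_p p) (NeZero.ne p)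
  rw [norm_pow, h, one_pow]

lemma econj (a : ZMod p) :
    (starRingEnd ℂ) (etaRoot p ^ a.val) = etaRoot p ^ ((-a).val) := by
  have h : etaRoot p ^ a.val * etaRoot p ^ ((-a).val) = 1 := by
    rw [← epow_add, add_neg_cancel, ZMod.val_zero, pow_zero]
  have habs : ‖etaRoot p ^ a.val‖ = 1 := eta_abs p _
  have hc : (starRingEnd ℂ) (etaRoot p ^ a.val) * etaRoot p ^ a.val = 1 := by
    rw [mul_comm, Complex.mul_conj, ← Complex.sq_norm, habs]; norm_num
  calc (starRingEnd ℂ) (etaRoot p ^ a.val)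
      = (starRingEnd ℂ) (etaRoot p ^ a.val) * (etaRoot p ^ a.val * etaRoot p ^ ((-a).val)) := by
        rw [h, mul_one]
    _ = etaRoot p ^ ((-a).val) := by rw [← mul_assoc, hc, one_mul]

lemma orth (a : ZMod p) :
    ∑ j : ZMod p, etaRoot p ^ ((a * j).val) = if a = 0 then (p : ℂ) else 0 := by
  rcases eq_or_ne a 0 with rfl | ha
  · simp [ZMod.val_zero]
  · simp only [if_neg ha]
    set S := ∑ j : ZMod p, etaRoot p ^ ((a * j).val) with hS
    have hshift : etaRoot p ^ a.val * S = S := by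
      rw [hS, Finset.mul_sum]
      have h1 : ∀ j : ZMod p, etaRoot p ^ a.val * etaRoot p ^ ((a * j).val)
          = etaRoot p ^ ((a * (j + 1)).val) := by
        intro j
        rw [mul_add, mul_one, ← epow_add, add_comm]
      simp_rw [h1]
      exact Fintype.sum_equiv (Equiv.addRight (1 : ZMod p)) _ _ (fun j => rfl)
    have hne : etaRoot p ^ a.val ≠ 1 := by
      intro h1
      have hdvd := ((eta_prim p).pow_eq_one_iff_dvd a.val).mp h1
      have hv : a.val ≠ 0 := by simpa [ZMod.val_eq_zero] using ha
      exact hv (Nat.eq_zero_of_dvd_of_lt hdvd (ZMod.val_lt a))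
    have h0 : (etaRoot p ^ a.val - 1) * S = 0 := by
      rw [sub_mul, one_mul, hshift, sub_self]
    rcases mul_eq_zero.mp h0 with h | h
    · exact absurd (sub_eq_zero.mp h) hne
    · exact h

lemma FM (w : ZMod p) (φ : ZMod p → ℂ) :
    Fop p (Mop p w φ) = Lop p w (Fop p φ) := by
  funext j
  simp only [Fop, Mop, Lop]
  congr 1
  apply Finset.sum_congr rfl
  intro i _
  rw [add_mul, epow_add]
  ring

lemma FL (t : ZMod p) (φ : ZMod p → ℂ) :
    Fop p (Lop p t φ) = Mop p (-t) (Fop p φ) := by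
  funext j
  simp only [Fop, Mop, Lop]
  have h1 : (∑ i : ZMod p, etaRoot p ^ ((j * i).val) * φ (i + t))
      = ∑ i : ZMod p, etaRoot p ^ ((-t * j).val) * (etaRoot p ^ ((j * i).val) * φ i) := by
    apply Fintype.sum_equiv (Equiv.addRight t)
    intro x
    simp only [Equiv.coe_addRight]
    rw [← mul_assoc, ← epow_add, show (-t * j + j * (x + t) : ZMod p) = j * x by ring]
  rw [h1, ← Finset.mul_sum]
  ring

lemma Fsmul (c : ℂ) (φ : ZMod p → ℂ) :
    Fop p (fun i => c * φ i) = fun j => c * Fop p φ j := by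
  funext j
  simp only [Fop]
  rw [Finset.mul_sum, Finset.mul_sum, Finset.mul_sum]
  apply Finset.sum_congr rfl
  intro i _
  ring

lemma inner_smul (c : ℂ) (φ ψ : ZMod p → ℂ) :
    innerSeq p φ (fun i => c * ψ i) = (starRingEnd ℂ) c * innerSeq p φ ψ := by
  simp only [innerSeq, map_mul, Finset.mul_sum]
  apply Finset.sum_congr rfl
  intro i _
  ring

lemma F_unitary (φ ψ : ZMod p → ℂ) :
    innerSeq p (Fop p φ) (Fop p ψ) = innerSeq p φ ψ := by
  have hp0 : (p : ℂ) ≠ 0 := Nat.cast_ne_zero.mpr (NeZero.ne p)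
  have hcc : (1 / (Real.sqrt p : ℂ)) * (1 / (Real.sqrt p : ℂ)) = 1 / (p : ℂ) := by
    rw [div_mul_div_comm, one_mul, ← Complex.ofReal_mul,
      Real.mul_self_sqrt (Nat.cast_nonneg p)]
    norm_num
  have hconjc : (starRingEnd ℂ) (1 / (Real.sqrt p : ℂ)) = 1 / (Real.sqrt p : ℂ) := by
    rw [map_div₀, map_one, Complex.conj_ofReal]
  simp only [innerSeq, Fop, map_mul, map_sum, hconjc, econj]
  have key : ∀ j : ZMod p,
      (1 / (Real.sqrt p : ℂ) * ∑ i : ZMod p, etaRoot p ^ ((j * i).val) * φ i) *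
        (1 / (Real.sqrt p : ℂ) * ∑ k : ZMod p, etaRoot p ^ ((-(j * k)).val) * (starRingEnd ℂ) (ψ k))
      = (1 / (p : ℂ)) * ∑ i : ZMod p, ∑ k : ZMod p,
          etaRoot p ^ (((i - k) * j).val) * (φ i * (starRingEnd ℂ) (ψ k)) := by
    intro j
    rw [mul_mul_mul_comm, hcc, Finset.sum_mul_sum]
    congr 1
    apply Finset.sum_congr rfl; intro i _
    apply Finset.sum_congr rfl; intro k _
    rw [show ((i - k) * j : ZMod p) = j * i + -(j * k) by ring, epow_add]
    ring
  simp_rw [key, ← Finset.mul_sum]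
  rw [Finset.sum_comm]
  have swap2 : ∀ i : ZMod p,
      (∑ j : ZMod p, ∑ k : ZMod p,
        etaRoot p ^ (((i - k) * j).val) * (φ i * (starRingEnd ℂ) (ψ k)))
      = ∑ k : ZMod p, (φ i * (starRingEnd ℂ) (ψ k)) *
          ∑ j : ZMod p, etaRoot p ^ (((i - k) * j).val) := by
    intro i
    rw [Finset.sum_comm]
    apply Finset.sum_congr rfl; intro k _
    rw [Finset.mul_sum]
    exact Finset.sum_congr rfl (fun j _ => mul_comm _ _)
  simp_rw [swap2, orth, sub_eq_zero]
  have collapse : ∀ i : ZMod p,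
      (∑ k : ZMod p, (φ i * (starRingEnd ℂ) (ψ k)) * (if i = k then (p : ℂ) else 0))
      = (p : ℂ) * (φ i * (starRingEnd ℂ) (ψ i)) := by
    intro i
    rw [Finset.sum_eq_single i]
    · rw [if_pos rfl]; ring
    · intro k _ hk; rw [if_neg (fun h => hk h.symm), mul_zero]
    · intro h; exact absurd (Finset.mem_univ i) h
  simp_rw [collapse, ← Finset.mul_sum, ← mul_assoc]
  rw [one_div, inv_mul_cancel₀ hp0, one_mul]

lemma amb_F (φ ψ : ZMod p → ℂ) (t w : ZMod p) :
    ‖amb p (Fop p φ) (Fop p ψ) t w‖ = ‖amb p φ ψ (-w) t‖ := by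
  have hLM : Lop p (-w) (Mop p t ψ)
      = fun i => etaRoot p ^ ((-(t * w)).val) * (Mop p t (Lop p (-w) ψ)) i := by
    funext i
    simp only [Lop, Mop, ← mul_assoc, ← epow_add]
    congr 2
    ring_nf
  have h1 : Mop p w (Lop p t (Fop p ψ))
      = Fop p (fun i => etaRoot p ^ ((-(t * w)).val) * (Mop p t (Lop p (-w) ψ)) i) := by
    rw [← FM, ← hLM]
    have := FL p (-w) (Mop p t ψ)
    rw [neg_neg] at this
    rw [← this]
  rw [amb, h1, Fsmul, inner_smul, F_unitary]
  rw [norm_mul, Complex.norm_conj, eta_abs, one_mul]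
  rfl

end lems

theorem stmt8 (p : ℕ) [Fact p.Prime] (hodd : Odd p)
    (S : Set (ZMod p → ℂ)) (σ ρ : ℝ)
    (hσ : ∀ φ ∈ S, ∀ t w : ZMod p, (t, w) ≠ (0, 0) → ‖amb p φ φ t w‖ ≤ σ)
    (hρ : ∀ φ ∈ S, ∀ ψ ∈ S, PhaseShiftDistinct p φ ψ →
      ∀ t w : ZMod p, ‖amb p φ ψ t w‖ ≤ ρ) :
    (∀ φ ∈ S, ∀ t w : ZMod p, (t, w) ≠ (0, 0) →
        ‖amb p (Fop p φ) (Fop p φ) t w‖ ≤ σ) ∧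
    (∀ φ ∈ S, ∀ ψ ∈ S, PhaseShiftDistinct p φ ψ →
        ∀ t w : ZMod p, ‖amb p (Fop p φ) (Fop p ψ) t w‖ ≤ ρ) ∧
    (∀ φ ∈ S, ∀ t : ZMod p, t ≠ 0 → ‖amb p φ φ t 0‖ ≤ σ) ∧
    (∀ φ ∈ S, ∀ ψ ∈ S, PhaseShiftDistinct p φ ψ →
        ∀ t : ZMod p, ‖amb p φ ψ t 0‖ ≤ ρ) := by
  have hmain : ∀ φ ψ : ZMod p → ℂ, ∀ t w : ZMod p,
      ‖amb p (Fop p φ) (Fop p ψ) t w‖ = ‖amb p φ ψ (-w) t‖ :=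
    fun φ ψ t w => amb_F p φ ψ t w
  refine ⟨?_, ?_, ?_, ?_⟩
  · intro φ hφ t w hne
    rw [hmain]
    apply hσ φ hφ (-w) t
    intro h
    obtain ⟨h1, h2⟩ := Prod.mk.inj h
    exact hne (by rw [h2, neg_eq_zero.mp h1])
  · intro φ hφ ψ hψ hd t w
    rw [hmain]
    exact hρ φ hφ ψ hψ hd (-w) t
  · intro φ hφ t ht
    exact hσ φ hφ t 0 (by simp [ht])
  · intro φ hφ ψ hψ hd t
    exact hρ φ hφ ψ hψ hd t 0
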